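/- Let f be submodular on N, let S ⊆ N, and let A_1, …, A_m be pairwise disjoint subsets of N\S, with T := S ∪ A_1 ∪ ⋯ ∪ A_m and sets S_1, …, S_m satisfying S_i ⊆ T \ (A_i ∪ ⋯ ∪ A_m). Then f(T) − f(T \ (A_1 ∪ ⋯ ∪ A_m)) ≤ Σ_{i=1}^m Σ_{q ∈ A_i} [f(S_i ∪ {q}) − f(S_i)]. -/
import Mathlib

private lemma marg_le {α : Type*} [DecidableEq α] (N : Finset α) (f : Finset α → ℝ)
    (hsub : ∀ X ⊆ N, ∀ Y ⊆ N, f (X ∩ Y) + f (X ∪ Y) ≤ f X + f Y)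
    (S X : Finset α) (hS : S ⊆ X) (hX : X ⊆ N) (q : α) (hq : q ∈ N) (hqX : q ∉ X) :
    f (insert q X) - f X ≤ f (insert q S) - f S := by
  have h := hsub X hX (insert q S) (Finset.insert_subset hq ((hS.trans hX) : S ⊆ N))
  have h1 : X ∩ insert q S = S := by
    ext x; simp only [Finset.mem_inter, Finset.mem_insert]
    constructor
    · rintro ⟨hx, rfl | hx2⟩
      · exact absurd hx hqX
      · exact hx2
    · intro hx; exact ⟨hS hx, Or.inr hx⟩
  have h2 : X ∪ insert q S = insert q X := by
    rw [Finset.union_insert, Finset.union_eq_left.mpr hS]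
  rw [h1, h2] at h
  linarith

private lemma add_set_le {α : Type*} [DecidableEq α] (N : Finset α) (f : Finset α → ℝ)
    (hsub : ∀ X ⊆ N, ∀ Y ⊆ N, f (X ∩ Y) + f (X ∪ Y) ≤ f X + f Y)
    (S V : Finset α) (hSV : S ⊆ V) (hVN : V ⊆ N)
    (B : Finset α) (hBN : B ⊆ N) (hdisj : Disjoint B V) :
    f (V ∪ B) - f V ≤ ∑ q ∈ B, (f (insert q S) - f S) := by
  induction B using Finset.induction_on with
  | empty => simp
  | @insert q B hqB ih =>
    have hBN' : B ⊆ N := (Finset.subset_insert q B).trans hBN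
    have hdisj' : Disjoint B V := (Finset.disjoint_insert_left.mp hdisj).2
    have hqV : q ∉ V := (Finset.disjoint_insert_left.mp hdisj).1
    have hqN : q ∈ N := hBN (Finset.mem_insert_self q B)
    have hqVB : q ∉ V ∪ B := by simp [hqV, hqB]
    have hstep : f (insert q (V ∪ B)) - f (V ∪ B) ≤ f (insert q S) - f S :=
      marg_le N f hsub S (V ∪ B) (hSV.trans Finset.subset_union_left)
        (Finset.union_subset hVN hBN') q hqN hqVB
    rw [Finset.union_insert, Finset.sum_insert hqB]
    have := ih hBN' hdisj'
    linarith

theorem removal_loss_bound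
    {α : Type*} [DecidableEq α] (N : Finset α) (f : Finset α → ℝ)
    (hsub : ∀ X ⊆ N, ∀ Y ⊆ N, f (X ∩ Y) + f (X ∪ Y) ≤ f X + f Y)
    (S : Finset α) (hSN : S ⊆ N)
    (m : ℕ) (A : Fin m → Finset α)
    (hAsub : ∀ i, A i ⊆ N \ S)
    (hdisj : ∀ i j, i ≠ j → Disjoint (A i) (A j))
    (T : Finset α) (hT : T = S ∪ Finset.univ.biUnion A)
    (Si : Fin m → Finset α)
    (hSi : ∀ i, Si i ⊆ T \ (Finset.univ.filter (fun j => i ≤ j)).biUnion A) :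
    f T - f (T \ Finset.univ.biUnion A) ≤
      ∑ i, ∑ q ∈ A i, (f (insert q (Si i)) - f (Si i)) := by
  classical
  have hTN : T ⊆ N := by
    rw [hT]
    apply Finset.union_subset hSN
    intro x hx
    rw [Finset.mem_biUnion] at hx
    obtain ⟨i, _, hxi⟩ := hx
    exact (Finset.mem_sdiff.mp (hAsub i hxi)).1
  set V : ℕ → Finset α := fun k =>
    T \ (Finset.univ.filter (fun j : Fin m => k ≤ j.val)).biUnion A with hV
  have hVm : V m = T := by
    have : (Finset.univ.filter (fun j : Fin m => m ≤ j.val)) = ∅ := by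
      apply Finset.filter_false_of_mem
      intro j _; exact Nat.not_le.mpr j.isLt
    simp [hV, this]
  have hV0 : V 0 = T \ Finset.univ.biUnion A := by
    simp [hV]
  have hAT : ∀ i : Fin m, A i ⊆ T := by
    intro i x hx
    rw [hT, Finset.mem_union]
    exact Or.inr (Finset.mem_biUnion.mpr ⟨i, Finset.mem_univ i, hx⟩)
  have hstep : ∀ k (hk : k < m),
      V (k + 1) = V k ∪ A ⟨k, hk⟩ ∧ Disjoint (A ⟨k, hk⟩) (V k) := by
    intro k hk
    constructor
    · ext x
      simp only [hV, Finset.mem_sdiff, Finset.mem_union, Finset.mem_biUnion,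
        Finset.mem_filter, Finset.mem_univ, true_and]
      constructor
      · rintro ⟨hxT, hx⟩
        by_cases hxA : x ∈ A ⟨k, hk⟩
        · exact Or.inr hxA
        · refine Or.inl ⟨hxT, ?_⟩
          rintro ⟨j, hkj, hxj⟩
          rcases Nat.eq_or_lt_of_le hkj with h | h
          · exact hxA (by
              have hje : (⟨k, hk⟩ : Fin m) = j := Fin.ext h
              rwa [hje])
          · exact hx ⟨j, h, hxj⟩
      · rintro (⟨hxT, hx⟩ | hxA)
        · exact ⟨hxT, fun ⟨j, hj, hxj⟩ => hx ⟨j, Nat.le_of_succ_le hj, hxj⟩⟩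
        · refine ⟨hAT _ hxA, ?_⟩
          rintro ⟨j, hj, hxj⟩
          have hne : (⟨k, hk⟩ : Fin m) ≠ j := by
            intro h; rw [← h] at hj; simp at hj
          exact (Finset.disjoint_left.mp (hdisj _ _ hne) hxA) hxj
    · rw [Finset.disjoint_left]
      intro x hxA hxV
      simp only [hV, Finset.mem_sdiff, Finset.mem_biUnion, Finset.mem_filter,
        Finset.mem_univ, true_and] at hxV
      exact hxV.2 ⟨⟨k, hk⟩, le_refl k, hxA⟩
  have key : ∀ k (hk : k < m),
      f (V (k + 1)) - f (V k) ≤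
        ∑ q ∈ A ⟨k, hk⟩, (f (insert q (Si ⟨k, hk⟩)) - f (Si ⟨k, hk⟩)) := by
    intro k hk
    obtain ⟨heq, hdj⟩ := hstep k hk
    have hVkN : V k ⊆ N := (Finset.sdiff_subset).trans hTN
    have hSiV : Si ⟨k, hk⟩ ⊆ V k := by
      intro x hx
      have := hSi ⟨k, hk⟩ hx
      simp only [hV, Finset.mem_sdiff, Finset.mem_biUnion, Finset.mem_filter,
        Finset.mem_univ, true_and, Fin.le_def] at this ⊢
      exact ⟨this.1, fun ⟨j, hj, hxj⟩ => this.2 ⟨j, hj, hxj⟩⟩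
    have hAN : A ⟨k, hk⟩ ⊆ N := fun x hx => (Finset.mem_sdiff.mp (hAsub _ hx)).1
    calc f (V (k + 1)) - f (V k) = f (V k ∪ A ⟨k, hk⟩) - f (V k) := by rw [heq]
      _ ≤ _ := add_set_le N f hsub (Si ⟨k, hk⟩) (V k) hSiV hVkN _ hAN hdj
  have htel : f T - f (T \ Finset.univ.biUnion A) =
      ∑ k ∈ Finset.range m, (f (V (k + 1)) - f (V k)) := by
    rw [Finset.sum_range_sub (fun k => f (V k)), hVm, hV0]
  rw [htel, ← Fin.sum_univ_eq_sum_range (fun k => f (V (k + 1)) - f (V k)) m]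
  apply Finset.sum_le_sum
  intro i _
  have := key i.val i.isLt
  simpa using this
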